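/- Let P be an idempotent operator on a finite-dimensional inner product space and x a unit eigenvector of P*P with eigenvalue 1. Then x ∈ im P ∩ (ker P)ᗮ. Conversely, every x ∈ im P ∩ (ker P)ᗮ satisfies P*P x = x. -/

import Mathlib

theorem stmt_5 {𝕜 E : Type*} [RCLike 𝕜] [NormedAddCommGroup E]
    [InnerProductSpace 𝕜 E] [FiniteDimensional 𝕜 E]
    (P : E →ₗ[𝕜] E) (hP : P ∘ₗ P = P) :
    (∀ x : E, ‖x‖ = 1 → ((LinearMap.adjoint P) ∘ₗ P) x = x →
      x ∈ LinearMap.range P ⊓ (LinearMap.ker P)ᗮ) ∧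
    (∀ x : E, x ∈ LinearMap.range P ⊓ (LinearMap.ker P)ᗮ →
      ((LinearMap.adjoint P) ∘ₗ P) x = x) := by
  have hPP : ∀ y, P (P y) = P y := fun y => congrArg (· y) hP
  constructor
  · intro x _ hx
    simp only [LinearMap.comp_apply] at hx
    have hperp : x ∈ (LinearMap.ker P)ᗮ := by
      intro u hu
      have : (inner 𝕜 u x : 𝕜) = inner 𝕜 (P u) (P x) := by
        conv_lhs => rw [← hx]
        rw [LinearMap.adjoint_inner_right]
      rw [this, LinearMap.mem_ker.mp hu, inner_zero_left]
    refine ⟨?_, hperp⟩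
    -- show P x = x
    have h1 : (inner 𝕜 (x - P x) x : 𝕜) = 0 := hperp _ (by
      simp [LinearMap.mem_ker, hPP x])
    have h2 : (inner 𝕜 (x - P x) (P x) : 𝕜) = 0 := by
      rw [← LinearMap.adjoint_inner_left]
      have : LinearMap.adjoint P (x - P x) = LinearMap.adjoint P x - x := by
        rw [map_sub, hx]
      rw [this, inner_sub_left, LinearMap.adjoint_inner_left]
      have h3 : (inner 𝕜 (P x) x : 𝕜) = inner 𝕜 x x := by
        have := h1
        rw [inner_sub_left, sub_eq_zero] at this
        exact this.symm
      have h4 : (inner 𝕜 x (P x) : 𝕜) = inner 𝕜 x x := by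
        have := congrArg (starRingEnd 𝕜) h3
        rwa [inner_conj_symm, inner_conj_symm] at this
      rw [h4, sub_self]
    have h5 : (inner 𝕜 (x - P x) (x - P x) : 𝕜) = 0 := by
      rw [inner_sub_right, h1, h2, sub_self]
    have h6 : x - P x = 0 := inner_self_eq_zero.mp h5
    exact ⟨x, ((sub_eq_zero.mp h6).symm)⟩
  · rintro x ⟨⟨y, hy⟩, hperp⟩
    simp only [LinearMap.comp_apply]
    have hPx : P x = x := by rw [← hy, hPP]
    rw [hPx]
    have key : ∀ v : E, (inner 𝕜 (LinearMap.adjoint P x - x) v : 𝕜) = 0 := by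
      intro v
      have hker : P v - v ∈ LinearMap.ker P := by
        simp [LinearMap.mem_ker, hPP v]
      have h0 : (inner 𝕜 (P v - v) x : 𝕜) = 0 := hperp _ hker
      have h0' : (inner 𝕜 x (P v - v) : 𝕜) = 0 := by
        have := congrArg (starRingEnd 𝕜) h0
        rwa [inner_conj_symm, map_zero] at this
      rw [inner_sub_left, LinearMap.adjoint_inner_left, ← inner_sub_right]
      exact h0'
    rw [← sub_eq_zero]
    exact inner_self_eq_zero.mp (key _)
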